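/- Let α, β ≥ 0 and let m : (0,∞) → [0,∞) be a monotone decreasing function with ∫₀^∞ min(t, 1)·m(t) dt < ∞. For z ∈ ℂ with Re z ≥ 0 define f(z) = α + β·z + ∫₀^∞ (1 − e^{−z t}) m(t) dt (the integral converges absolutely). Then the function γ : ℝ → ℂ, γ(ξ) := −iξ·f(iξ), is conditionally negative definite: γ(0) = 0, γ(−ξ) = conj(γ(ξ)) for all ξ ∈ ℝ, and for every n ∈ ℕ, all points ξ₁, …, ξₙ ∈ ℝ and all complex numbers a₁, …, aₙ with a₁ + ⋯ + aₙ = 0 one has Re(∑_{i,j=1}^n aᵢ γ(ξᵢ − ξⱼ) conj(aⱼ)) ≤ 0. Moreover, the real-valued function ξ ↦ −Re(iξ·f(iξ)) is a variogram on ℝ. -/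

import Mathlib

open scoped BigOperators
open MeasureTheory

/-- A variogram on ℝ: nonnegative at the origin, even, and conditionally negative
definite (for complex weights summing to zero, the quadratic form is real and ≤ 0). -/
def IsVariogram1 (γ : ℝ → ℝ) : Prop :=
  0 ≤ γ 0 ∧ (∀ x, γ (-x) = γ x) ∧
    ∀ (n : ℕ) (x : Fin n → ℝ) (a : Fin n → ℂ),
      (∑ i, a i) = 0 →
      (∑ i, ∑ j, a i * (γ (x i - x j) : ℂ) * (starRingEnd ℂ) (a j)).im = 0 ∧
      (∑ i, ∑ j, a i * (γ (x i - x j) : ℂ) * (starRingEnd ℂ) (a j)).re ≤ 0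

open Complex Set

lemma norm_expI_sub_one_le (θ : ℝ) : ‖Complex.exp (θ * I) - 1‖ ≤ |θ| := by
  have h : Complex.exp (θ * I) - 1 = (Real.cos θ - 1 : ℝ) + (Real.sin θ : ℝ) * I := by
    rw [Complex.exp_mul_I]
    push_cast [Complex.ofReal_cos, Complex.ofReal_sin]
    ring
  have h2 : ‖Complex.exp (θ * I) - 1‖ ^ 2 = (Real.cos θ - 1) ^ 2 + Real.sin θ ^ 2 := by
    rw [h, Complex.sq_norm, Complex.normSq_add_mul_I]
  have hb : |Real.sin (θ/2)| ≤ |θ/2| := Real.abs_sin_le_abs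
  have hb2 : Real.sin (θ/2) ^ 2 ≤ (θ/2) ^ 2 := by
    rw [← _root_.sq_abs, ← _root_.sq_abs (θ/2)]
    exact pow_le_pow_left₀ (abs_nonneg _) hb 2
  have hcos : Real.cos θ = 1 - 2 * Real.sin (θ/2) ^ 2 := by
    have hs := Real.sin_sq_eq_half_sub (θ / 2)
    rw [show 2 * (θ/2) = θ by ring] at hs
    linarith
  have h3 : (Real.cos θ - 1) ^ 2 + Real.sin θ ^ 2 ≤ θ ^ 2 := by
    nlinarith [Real.sin_sq_add_cos_sq θ, Real.cos_le_one θ, Real.neg_one_le_cos θ]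
  have h4 : ‖Complex.exp (θ * I) - 1‖ ^ 2 ≤ |θ| ^ 2 := by
    rw [h2, _root_.sq_abs]; exact h3
  have := norm_nonneg (Complex.exp (θ * I) - 1)
  nlinarith [abs_nonneg θ]

lemma norm_one_sub_exp_le (z : ℂ) (hz : 0 ≤ z.re) {t : ℝ} (ht : 0 < t) :
    ‖1 - Complex.exp (-z * t)‖ ≤ (2*‖z‖+2) * min t 1 := by
  have hmin : 0 < min t 1 := lt_min ht one_pos
  have hzn : (0:ℝ) ≤ ‖z‖ := norm_nonneg z
  by_cases hc : ‖z‖ * t ≤ 1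
  · have h4 : ‖(-z * (t:ℂ))‖ = ‖z‖ * t := by
      rw [norm_mul, norm_neg, Complex.norm_real, Real.norm_eq_abs, abs_of_pos ht]
    have h1 : ‖(-z * (t:ℂ))‖ ≤ 1 := by rw [h4]; exact hc
    have h2 := Complex.norm_exp_sub_one_le h1
    have h3 : ‖1 - Complex.exp (-z * t)‖ = ‖(Complex.exp (-z*t) - 1)‖ := by
      rw [norm_sub_rev]
    rw [h3]
    refine h2.trans ?_
    rw [h4]
    rcases le_or_gt t 1 with h | h
    · rw [min_eq_left h]; nlinarith
    · rw [min_eq_right h.le]; nlinarith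
  · push_neg at hc
    have h2 : ‖1 - Complex.exp (-z * t)‖ ≤ 2 := by
      refine (norm_sub_le _ _).trans ?_
      have : ‖Complex.exp (-z * t)‖ ≤ 1 := by
        rw [Complex.norm_exp]
        refine Real.exp_le_one_iff.mpr ?_
        have : (-z * ↑t).re = -(z.re * t) := by simp [Complex.mul_re]
        rw [this]
        exact neg_nonpos.mpr (mul_nonneg hz ht.le)
      rw [norm_one]; linarith
    refine h2.trans ?_
    rcases le_or_gt t 1 with h | h
    · rw [min_eq_left h]
      calc (2:ℝ) = 2 * 1 := by ring
      _ ≤ 2 * (‖z‖ * t) := by nlinarith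
      _ ≤ (2*‖z‖+2) * t := by nlinarith
    · rw [min_eq_right h.le]; nlinarith

lemma m_aesm (m : ℝ → ℝ) (hm_int : IntegrableOn (fun t : ℝ => min t 1 * m t) (Set.Ioi 0)) :
    AEStronglyMeasurable m (volume.restrict (Set.Ioi 0)) := by
  have h1 := hm_int.aestronglyMeasurable
  have h2 : AEStronglyMeasurable (fun t : ℝ => (min t 1)⁻¹ * (min t 1 * m t))
      (volume.restrict (Set.Ioi 0)) :=
    (((measurable_id.min measurable_const).inv.aemeasurable).mul
      h1.aemeasurable).aestronglyMeasurable
  refine h2.congr ?_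
  filter_upwards [ae_restrict_mem measurableSet_Ioi] with t ht
  have : min t 1 ≠ 0 := ne_of_gt (lt_min ht one_pos)
  field_simp

lemma integrable_one_sub_exp (m : ℝ → ℝ) (hm_nonneg : ∀ t : ℝ, 0 < t → 0 ≤ m t)
    (hm_int : IntegrableOn (fun t : ℝ => min t 1 * m t) (Set.Ioi 0))
    (z : ℂ) (hz : 0 ≤ z.re) :
    IntegrableOn (fun t : ℝ => (1 - Complex.exp (-z * (t:ℂ))) * (m t : ℂ)) (Set.Ioi 0) := by
  have hms := m_aesm m hm_int
  refine Integrable.mono (hm_int.const_mul (2*‖z‖+2)) ?_ ?_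
  · exact ((Continuous.aestronglyMeasurable (by continuity)).mul
      (Complex.continuous_ofReal.comp_aestronglyMeasurable hms))
  · filter_upwards [ae_restrict_mem measurableSet_Ioi] with t ht
    have h0 : 0 ≤ m t := hm_nonneg t ht
    have hmin : 0 < min t 1 := lt_min ht one_pos
    have hb := norm_one_sub_exp_le z hz ht
    rw [norm_mul, Complex.norm_real, Real.norm_eq_abs, _root_.abs_of_nonneg h0,
      Real.norm_eq_abs, _root_.abs_of_nonneg
        (mul_nonneg (by positivity) (mul_nonneg hmin.le h0))]
    calc ‖1 - Complex.exp (-z * t)‖ * m t ≤ ((2*‖z‖+2) * min t 1) * m t := by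
          exact mul_le_mul_of_nonneg_right hb h0
      _ = (2*‖z‖+2) * (min t 1 * m t) := by ring

lemma indicator_int (m : ℝ → ℝ) {t : ℝ} (h0 : 0 ≤ m t) (c : ℝ) :
    ∫ s in Set.Ioi (0:ℝ), (Set.Ioo (0:ℝ) (m t)).indicator (fun _ => c) s = c * m t := by
  rw [MeasureTheory.integral_indicator measurableSet_Ioo,
    Measure.restrict_restrict measurableSet_Ioo,
    Set.inter_eq_left.mpr Set.Ioo_subset_Ioi_self, setIntegral_const, smul_eq_mul,
    Real.volume_real_Ioo_of_le h0, sub_zero, mul_comm]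

lemma key_nonneg (m : ℝ → ℝ) (hm_nonneg : ∀ t : ℝ, 0 < t → 0 ≤ m t)
    (hm_mono : AntitoneOn m (Set.Ioi 0))
    (hm_int : IntegrableOn (fun t : ℝ => min t 1 * m t) (Set.Ioi 0))
    (F F' : ℝ → ℝ) (hder : ∀ t, HasDerivAt F (F' t) t)
    (hcont : Continuous F') (hF0 : F 0 = 0) (hFnn : ∀ t, 0 ≤ F t)
    (K : ℝ) (hK : ∀ t : ℝ, 0 < t → |F' t| ≤ K * min t 1) :
    0 ≤ ∫ t in Set.Ioi (0:ℝ), F' t * m t := by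
  have hmm := (m_aesm m hm_int).aemeasurable
  set m₁ : ℝ → ℝ := hmm.mk m with hm₁def
  have hm₁meas : Measurable m₁ := hmm.measurable_mk
  have heq : m =ᵐ[volume.restrict (Set.Ioi 0)] m₁ := hmm.ae_eq_mk
  set f : ℝ → ℝ → ℝ := fun t s => (Set.Ioo (0:ℝ) (m t)).indicator (fun _ => F' t) s with hfdef
  -- boundedness of superlevel sets
  have hbdd : ∀ s : ℝ, 0 < s → BddAbove {t : ℝ | 0 < t ∧ s < m t} := by
    intro s hs
    by_contra hb
    have hsub : ∀ t : ℝ, 1 < t → s ≤ min t 1 * m t := by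
      intro t ht
      obtain ⟨u, hu, htu⟩ := not_bddAbove_iff.mp hb t
      have h1 : m u ≤ m t := hm_mono (Set.mem_Ioi.mpr (by linarith)) (Set.mem_Ioi.mpr hu.1) htu.le
      have : s < m t := lt_of_lt_of_le hu.2 h1
      rw [min_eq_right ht.le, one_mul]
      exact this.le
    have hint1 : IntegrableOn (fun t : ℝ => min t 1 * m t) (Set.Ioi 1) :=
      hm_int.mono_set (Set.Ioi_subset_Ioi zero_le_one)
    have hconst : IntegrableOn (fun _ : ℝ => s) (Set.Ioi 1) := by
      refine Integrable.mono hint1 aestronglyMeasurable_const ?_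
      filter_upwards [ae_restrict_mem measurableSet_Ioi] with t ht
      have h1 := hsub t ht
      rw [Real.norm_eq_abs, Real.norm_eq_abs, abs_of_pos hs, _root_.abs_of_nonneg (le_trans hs.le h1)]
      exact h1
    rcases (integrableOn_const_iff (C := s)).mp hconst with h | h
    · exact hs.ne' (enorm_eq_zero.mp h)
    · rw [Real.volume_Ioi] at h; exact (lt_irrefl _ h).elim
  -- left-hand side computation
  have hL : ∀ t ∈ Set.Ioi (0:ℝ), (∫ s in Set.Ioi (0:ℝ), f t s) = F' t * m t := by
    intro t ht
    exact indicator_int m (hm_nonneg t ht) (F' t)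
  -- right-hand side nonnegativity
  have hR : ∀ s ∈ Set.Ioi (0:ℝ), 0 ≤ ∫ t in Set.Ioi (0:ℝ), f t s := by
    intro s hs
    rw [Set.mem_Ioi] at hs
    set T := {t : ℝ | 0 < t ∧ s < m t} with hTdef
    have hTd : ∀ ⦃u t : ℝ⦄, t ∈ T → 0 < u → u ≤ t → u ∈ T := by
      intro u t htT hu hut
      exact ⟨hu, lt_of_lt_of_le htT.2 (hm_mono (Set.mem_Ioi.mpr hu) (Set.mem_Ioi.mpr htT.1) hut)⟩
    have hfs : Set.EqOn (fun t => f t s) (T.indicator F') (Set.Ioi (0:ℝ)) := by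
      intro t ht
      by_cases hc : s < m t
      · simp only [f]
        rw [Set.indicator_of_mem (show s ∈ Set.Ioo 0 (m t) from ⟨hs, hc⟩),
          Set.indicator_of_mem (show t ∈ T from ⟨ht, hc⟩)]
      · simp only [f]
        rw [Set.indicator_of_notMem (fun hmem => hc hmem.2),
          Set.indicator_of_notMem (fun hmem : t ∈ T => hc hmem.2)]
    rw [setIntegral_congr_fun measurableSet_Ioi hfs]
    rcases Set.eq_empty_or_nonempty T with hemp | hne
    · rw [hemp]; simp
    · set τ := sSup T with hτdef
      have hbdd' := hbdd s hs
      have hτT : ∀ t ∈ T, t ≤ τ := fun t ht => le_csSup hbdd' ht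
      obtain ⟨t0, ht0⟩ := hne
      have hτpos : 0 < τ := lt_of_lt_of_le ht0.1 (hτT t0 ht0)
      have hsub1 : Set.Ioo 0 τ ⊆ T := by
        intro u hu
        obtain ⟨t, htT, hut⟩ := exists_lt_of_lt_csSup ⟨t0, ht0⟩ hu.2
        exact hTd htT hu.1 hut.le
      have hTsub : T ⊆ Set.Ioi (0:ℝ) := fun t ht => ht.1
      have hFTC : (∫ t in Set.Ioc (0:ℝ) τ, F' t) = F τ := by
        have h1 := intervalIntegral.integral_eq_sub_of_hasDerivAt (f := F) (f' := F')
          (a := 0) (b := τ) (fun t _ => hder t) (hcont.intervalIntegrable 0 τ)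
        rw [intervalIntegral.integral_of_le hτpos.le] at h1
        rw [h1, hF0, sub_zero]
      have hTeq : T = Set.Ioo 0 τ ∨ T = Set.Ioc 0 τ := by
        by_cases hm : τ ∈ T
        · right; ext u
          constructor
          · exact fun hu => ⟨hu.1, hτT u hu⟩
          · rintro ⟨hu1, hu2⟩; exact hTd hm hu1 hu2
        · left; ext u
          constructor
          · intro hu
            refine ⟨hu.1, lt_of_le_of_ne (hτT u hu) ?_⟩
            rintro rfl; exact hm hu
          · exact fun hu => hsub1 hu
      have hTmeas : MeasurableSet T := by
        rcases hTeq with h | h <;> rw [h]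
        exacts [measurableSet_Ioo, measurableSet_Ioc]
      rw [MeasureTheory.integral_indicator hTmeas, Measure.restrict_restrict hTmeas,
        Set.inter_eq_left.mpr hTsub]
      have : (∫ t in T, F' t) = F τ := by
        rcases hTeq with h | h <;> rw [h]
        · rw [← MeasureTheory.integral_Ioc_eq_integral_Ioo]; exact hFTC
        · exact hFTC
      rw [this]
      exact hFnn τ
  -- product integrability
  have hG : AEStronglyMeasurable (Function.uncurry f)
      ((volume.restrict (Set.Ioi 0)).prod (volume.restrict (Set.Ioi 0))) := by
    have hmeasU : MeasurableSet {p : ℝ × ℝ | 0 < p.2 ∧ p.2 < m₁ p.1} :=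
      (measurableSet_lt measurable_const measurable_snd).inter
        (measurableSet_lt measurable_snd (hm₁meas.comp measurable_fst))
    refine AEStronglyMeasurable.congr
      (f := fun p : ℝ × ℝ => ({p : ℝ × ℝ | 0 < p.2 ∧ p.2 < m₁ p.1}).indicator
        (fun p => F' p.1) p) ?_ ?_
    · exact ((hcont.comp continuous_fst).aestronglyMeasurable).indicator hmeasU
    · have hnull : ∀ᵐ p ∂((volume.restrict (Set.Ioi (0:ℝ))).prod (volume.restrict (Set.Ioi (0:ℝ)))),
          m p.1 = m₁ p.1 := by
        have h0 : (volume.restrict (Set.Ioi 0)) {t : ℝ | m t ≠ m₁ t} = 0 := heq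
        obtain ⟨N', hsubN, hmeasN, hnullN⟩ := exists_measurable_superset_of_null h0
        rw [ae_iff]
        have hps : {p : ℝ × ℝ | ¬m p.1 = m₁ p.1} ⊆ N' ×ˢ (Set.univ : Set ℝ) :=
          fun p hp => ⟨hsubN hp, trivial⟩
        refine measure_mono_null hps ?_
        rw [Measure.prod_prod, hnullN, zero_mul]
      filter_upwards [hnull] with p hp
      simp only [Function.uncurry, f]
      by_cases hc : 0 < p.2 ∧ p.2 < m p.1
      · rw [Set.indicator_of_mem
            (show p ∈ {q : ℝ × ℝ | 0 < q.2 ∧ q.2 < m₁ q.1} from ⟨hc.1, hp ▸ hc.2⟩),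
          Set.indicator_of_mem (Set.mem_Ioo.mpr hc)]
      · rw [Set.indicator_of_notMem
            (fun hmem : p ∈ {q : ℝ × ℝ | 0 < q.2 ∧ q.2 < m₁ q.1} => hc ⟨hmem.1, hp ▸ hmem.2⟩),
          Set.indicator_of_notMem (fun hmem => hc (Set.mem_Ioo.mp hmem))]
  have hint : Integrable (Function.uncurry f)
      ((volume.restrict (Set.Ioi 0)).prod (volume.restrict (Set.Ioi 0))) := by
    rw [integrable_prod_iff hG]
    constructor
    · refine Filter.Eventually.of_forall (fun t => ?_)
      show Integrable ((Set.Ioo (0:ℝ) (m t)).indicator (fun _ => F' t)) (volume.restrict (Set.Ioi 0))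
      refine (integrable_indicator_iff measurableSet_Ioo).mpr ?_
      refine (integrableOn_const_iff (C := F' t)).mpr (Or.inr ?_)
      refine lt_of_le_of_lt (Measure.restrict_apply_le _ _) ?_
      rw [Real.volume_Ioo]
      exact ENNReal.ofReal_lt_top
    · refine Integrable.mono (hm_int.const_mul K) (hG.norm.integral_prod_right') ?_
      filter_upwards [ae_restrict_mem measurableSet_Ioi] with t ht
      have h0 := hm_nonneg t ht
      have hnorm : (fun s => ‖f t s‖) =
          fun s => (Set.Ioo (0:ℝ) (m t)).indicator (fun _ => |F' t|) s := by
        funext s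
        by_cases hc : s ∈ Set.Ioo (0:ℝ) (m t)
        · simp only [f]; rw [Set.indicator_of_mem hc, Set.indicator_of_mem hc, Real.norm_eq_abs]
        · simp only [f]; rw [Set.indicator_of_notMem hc, Set.indicator_of_notMem hc, norm_zero]
      have hval : (∫ s in Set.Ioi (0:ℝ), ‖f t s‖) = |F' t| * m t := by
        rw [hnorm]; exact indicator_int m h0 |F' t|
      simp only [Function.uncurry_apply_pair]
      rw [hval, Real.norm_eq_abs, Real.norm_eq_abs,
        _root_.abs_of_nonneg (mul_nonneg (abs_nonneg (F' t)) h0)]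
      have hb : |F' t| * m t ≤ K * (min t 1 * m t) := by
        calc |F' t| * m t ≤ (K * min t 1) * m t := mul_le_mul_of_nonneg_right (hK t ht) h0
          _ = K * (min t 1 * m t) := by ring
      exact hb.trans (le_abs_self _)
  have hswap := MeasureTheory.integral_integral_swap hint
  have hstep : (∫ t in Set.Ioi (0:ℝ), F' t * m t) =
      ∫ t in Set.Ioi (0:ℝ), ∫ s in Set.Ioi (0:ℝ), f t s :=
    setIntegral_congr_fun measurableSet_Ioi (fun t ht => (hL t ht).symm)
  rw [hstep, hswap]
  exact setIntegral_nonneg measurableSet_Ioi hR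

lemma hasDerivAt_cexp_real (c w : ℂ) (t : ℝ) :
    HasDerivAt (fun t : ℝ => c * Complex.exp (w * t)) (c * w * Complex.exp (w * t)) t := by
  have h1 : HasDerivAt (fun z : ℂ => c * Complex.exp (w * z))
      (c * (Complex.exp (w * t) * w)) (t : ℂ) := by
    have h2 : HasDerivAt (fun z : ℂ => w * z) (w * 1) (t:ℂ) := (hasDerivAt_id _).const_mul w
    have h3 := (Complex.hasDerivAt_exp (w * t)).comp (t:ℂ) h2
    have h4 := h3.const_mul c
    simpa [Function.comp, mul_one] using h4
  have h5 := h1.comp_ofReal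
  convert h5 using 1
  ring

lemma hasDerivAt_re_comp {H : ℝ → ℂ} {H' : ℂ} {t : ℝ} (h : HasDerivAt H H' t) :
    HasDerivAt (fun t => (H t).re) H'.re t := by
  have := (Complex.reCLM.hasFDerivAt (x := H t)).comp_hasDerivAt t h
  exact this

lemma part4 (α β : ℝ) (hβ : 0 ≤ β) (m : ℝ → ℝ)
    (hm_nonneg : ∀ t : ℝ, 0 < t → 0 ≤ m t)
    (hm_mono : AntitoneOn m (Set.Ioi 0))
    (hm_int : IntegrableOn (fun t : ℝ => min t 1 * m t) (Set.Ioi 0))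
    (f : ℂ → ℂ)
    (hf : ∀ z : ℂ, 0 ≤ z.re → f z = (α : ℂ) + (β : ℂ) * z +
        ∫ t in Set.Ioi (0 : ℝ), (1 - Complex.exp (-z * (t : ℂ))) * (m t : ℂ))
    (n : ℕ) (x : Fin n → ℝ) (a : Fin n → ℂ) (ha : (∑ i, a i) = 0) :
    (∑ i, ∑ j, a i * (-(Complex.I * ((x i - x j : ℝ) : ℂ)) *
        f (Complex.I * ((x i - x j : ℝ) : ℂ))) * (starRingEnd ℂ) (a j)).re ≤ 0 := by
  classical
  set b : Fin n → ℂ := fun j => (starRingEnd ℂ) (a j) with hbdef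
  have hb : ∑ j, b j = 0 := by
    simp only [b, ← map_sum, ha, map_zero]
  set ξ : Fin n → Fin n → ℝ := fun i j => x i - x j with hξdef
  set w : ℝ → ℂ := fun r =>
    ∫ t in Set.Ioi (0:ℝ), (1 - Complex.exp (-(I * (r:ℂ)) * (t:ℂ))) * (m t : ℂ) with hwdef
  have hfval : ∀ r : ℝ, f (I * (r:ℂ)) = (α:ℂ) + (β:ℂ) * (I*(r:ℂ)) + w r := by
    intro r
    rw [hf (I * (r:ℂ)) (by simp)]
  have hfact : ∀ (u v : Fin n → ℂ), (∑ i, ∑ j, u i * v j) = (∑ i, u i) * (∑ j, v j) :=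
    fun u v => (Finset.sum_mul_sum _ _ _ _).symm
  -- basic vanishing sums
  have hII : (∑ i, ∑ j, a i * b j * ((ξ i j : ℝ):ℂ)) = 0 := by
    have h1 : ∀ i j, a i * b j * ((ξ i j : ℝ):ℂ)
        = (a i * (x i:ℂ)) * b j - a i * (b j * (x j:ℂ)) := by
      intro i j; simp only [ξ]; push_cast; ring
    calc (∑ i, ∑ j, a i * b j * ((ξ i j : ℝ):ℂ))
        = ∑ i, ∑ j, ((a i * (x i:ℂ)) * b j - a i * (b j * (x j:ℂ))) :=
          Finset.sum_congr rfl fun i _ => Finset.sum_congr rfl fun j _ => h1 i j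
      _ = (∑ i, ∑ j, (a i * (x i:ℂ)) * b j) - ∑ i, ∑ j, a i * (b j * (x j:ℂ)) := by
          rw [← Finset.sum_sub_distrib]
          exact Finset.sum_congr rfl fun i _ => by rw [← Finset.sum_sub_distrib]
      _ = (∑ i, a i * (x i:ℂ)) * (∑ j, b j) - (∑ i, a i) * (∑ j, b j * (x j:ℂ)) := by
          rw [hfact, hfact]
      _ = 0 := by rw [ha, hb]; ring
  have hIIm : (∑ i, ∑ j, a i * b j * (-(I * ((ξ i j : ℝ):ℂ)))) = 0 := by
    calc (∑ i, ∑ j, a i * b j * (-(I * ((ξ i j : ℝ):ℂ))))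
        = ∑ i, ∑ j, (-I) * (a i * b j * ((ξ i j : ℝ):ℂ)) :=
          Finset.sum_congr rfl fun i _ => Finset.sum_congr rfl fun j _ => by ring
      _ = (-I) * ∑ i, ∑ j, a i * b j * ((ξ i j : ℝ):ℂ) := by
          rw [Finset.mul_sum]
          exact Finset.sum_congr rfl fun i _ => by rw [Finset.mul_sum]
      _ = 0 := by rw [hII, mul_zero]
  have hIII : (∑ i, ∑ j, a i * b j * ((ξ i j : ℝ):ℂ)^2)
      = -2 * (∑ i, a i * (x i:ℂ)) * (∑ j, b j * (x j:ℂ)) := by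
    have h1 : ∀ i j, a i * b j * ((ξ i j : ℝ):ℂ)^2
        = ((a i * (x i:ℂ)^2) * b j + a i * (b j * (x j:ℂ)^2))
          - 2 * ((a i * (x i:ℂ)) * (b j * (x j:ℂ))) := by
      intro i j; simp only [ξ]; push_cast; ring
    calc (∑ i, ∑ j, a i * b j * ((ξ i j : ℝ):ℂ)^2)
        = ∑ i, ∑ j, (((a i * (x i:ℂ)^2) * b j + a i * (b j * (x j:ℂ)^2))
            - 2 * ((a i * (x i:ℂ)) * (b j * (x j:ℂ)))) :=
          Finset.sum_congr rfl fun i _ => Finset.sum_congr rfl fun j _ => h1 i j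
      _ = ((∑ i, ∑ j, (a i * (x i:ℂ)^2) * b j) + ∑ i, ∑ j, a i * (b j * (x j:ℂ)^2))
            - ∑ i, ∑ j, 2 * ((a i * (x i:ℂ)) * (b j * (x j:ℂ))) := by
          simp only [Finset.sum_sub_distrib, Finset.sum_add_distrib]
      _ = ((∑ i, a i * (x i:ℂ)^2) * (∑ j, b j) + (∑ i, a i) * (∑ j, b j * (x j:ℂ)^2))
            - 2 * ((∑ i, a i * (x i:ℂ)) * (∑ j, b j * (x j:ℂ))) := by
          rw [hfact, hfact]
          congr 1
          calc (∑ i, ∑ j, 2 * ((a i * (x i:ℂ)) * (b j * (x j:ℂ))))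
              = 2 * ∑ i, ∑ j, (a i * (x i:ℂ)) * (b j * (x j:ℂ)) := by
                rw [Finset.mul_sum]
                exact Finset.sum_congr rfl fun i _ => by rw [Finset.mul_sum]
            _ = 2 * ((∑ i, a i * (x i:ℂ)) * (∑ j, b j * (x j:ℂ))) := by rw [hfact]
      _ = -2 * (∑ i, a i * (x i:ℂ)) * (∑ j, b j * (x j:ℂ)) := by rw [ha, hb]; ring
  -- split the quadratic form
  have hterm : ∀ i j, a i * (-(I * ((ξ i j : ℝ) : ℂ)) * f (I * ((ξ i j : ℝ):ℂ))) * b j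
      = (-(I*(α:ℂ))) * (a i * b j * ((ξ i j : ℝ):ℂ))
        + (β:ℂ) * (a i * b j * ((ξ i j : ℝ):ℂ)^2)
        + (a i * b j * (-(I * ((ξ i j : ℝ):ℂ)))) * w (ξ i j) := by
    intro i j
    rw [hfval (ξ i j)]
    have hI2 : I * I = -1 := Complex.I_mul_I
    ring_nf
    rw [Complex.I_sq]
    ring
  have hsplit : (∑ i, ∑ j, a i * (-(I * ((ξ i j : ℝ) : ℂ)) * f (I * ((ξ i j : ℝ):ℂ))) * b j)
      = (∑ i, ∑ j, (-(I*(α:ℂ))) * (a i * b j * ((ξ i j : ℝ):ℂ)))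
        + (∑ i, ∑ j, (β:ℂ) * (a i * b j * ((ξ i j : ℝ):ℂ)^2))
        + ∑ i, ∑ j, (a i * b j * (-(I * ((ξ i j : ℝ):ℂ)))) * w (ξ i j) := by
    rw [← Finset.sum_add_distrib, ← Finset.sum_add_distrib]
    refine Finset.sum_congr rfl fun i _ => ?_
    rw [← Finset.sum_add_distrib, ← Finset.sum_add_distrib]
    exact Finset.sum_congr rfl fun j _ => hterm i j
  -- term A
  have hA : (∑ i, ∑ j, (-(I*(α:ℂ))) * (a i * b j * ((ξ i j : ℝ):ℂ))) = 0 := by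
    calc (∑ i, ∑ j, (-(I*(α:ℂ))) * (a i * b j * ((ξ i j : ℝ):ℂ)))
        = (-(I*(α:ℂ))) * ∑ i, ∑ j, a i * b j * ((ξ i j : ℝ):ℂ) := by
          rw [Finset.mul_sum]
          exact Finset.sum_congr rfl fun i _ => by rw [Finset.mul_sum]
      _ = 0 := by rw [hII, mul_zero]
  -- term B
  have hBval : (∑ i, ∑ j, (β:ℂ) * (a i * b j * ((ξ i j : ℝ):ℂ)^2))
      = ((-2 * β * Complex.normSq (∑ i, a i * (x i:ℂ)) : ℝ) : ℂ) := by
    have hT : (∑ j, b j * (x j : ℂ)) = (starRingEnd ℂ) (∑ i, a i * (x i:ℂ)) := by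
      rw [map_sum]
      exact Finset.sum_congr rfl fun j _ => by
        rw [map_mul, Complex.conj_ofReal]
    calc (∑ i, ∑ j, (β:ℂ) * (a i * b j * ((ξ i j : ℝ):ℂ)^2))
        = (β:ℂ) * ∑ i, ∑ j, a i * b j * ((ξ i j : ℝ):ℂ)^2 := by
          rw [Finset.mul_sum]
          exact Finset.sum_congr rfl fun i _ => by rw [Finset.mul_sum]
      _ = (β:ℂ) * (-2 * (∑ i, a i * (x i:ℂ)) * (∑ j, b j * (x j:ℂ))) := by rw [hIII]
      _ = (β:ℂ) * (-2 * ((∑ i, a i * (x i:ℂ)) * (starRingEnd ℂ) (∑ i, a i * (x i:ℂ)))) := by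
          rw [hT]; ring
      _ = ((-2 * β * Complex.normSq (∑ i, a i * (x i:ℂ)) : ℝ) : ℂ) := by
          rw [Complex.mul_conj]; push_cast; ring
  -- term C
  set H : ℝ → ℂ := fun t => ∑ i, ∑ j, (a i * b j) * Complex.exp (-(I * ((ξ i j:ℝ):ℂ)) * (t:ℂ))
    with hHdef
  set H' : ℝ → ℂ := fun t => ∑ i, ∑ j,
      (a i * b j) * (-(I * ((ξ i j:ℝ):ℂ))) * Complex.exp (-(I * ((ξ i j:ℝ):ℂ)) * (t:ℂ))
    with hH'def
  have hint : ∀ r : ℝ, IntegrableOn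
      (fun t : ℝ => (1 - Complex.exp (-(I*(r:ℂ)) * (t:ℂ))) * (m t:ℂ)) (Set.Ioi 0) :=
    fun r => integrable_one_sub_exp m hm_nonneg hm_int (I*(r:ℂ)) (by simp)
  have hCint : ∀ i j, IntegrableOn (fun t : ℝ => (a i * b j * (-(I * ((ξ i j:ℝ):ℂ))))
      * ((1 - Complex.exp (-(I*((ξ i j:ℝ):ℂ)) * (t:ℂ))) * (m t:ℂ))) (Set.Ioi 0) :=
    fun i j => (hint (ξ i j)).const_mul _
  have hsum3 : (∑ i, ∑ j, (a i * b j * (-(I * ((ξ i j:ℝ):ℂ)))) * w (ξ i j))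
      = ∫ t in Set.Ioi (0:ℝ), ∑ i, ∑ j, (a i * b j * (-(I * ((ξ i j:ℝ):ℂ))))
          * ((1 - Complex.exp (-(I*((ξ i j:ℝ):ℂ)) * (t:ℂ))) * (m t:ℂ)) := by
    rw [MeasureTheory.integral_finset_sum _
      (fun i _ => integrable_finset_sum _ (fun j _ => hCint i j))]
    refine Finset.sum_congr rfl fun i _ => ?_
    rw [MeasureTheory.integral_finset_sum _ (fun j _ => hCint i j)]
    refine Finset.sum_congr rfl fun j _ => ?_
    rw [hwdef]
    exact (MeasureTheory.integral_const_mul _ _).symm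
  have hpt : ∀ t : ℝ, (∑ i, ∑ j, (a i * b j * (-(I * ((ξ i j:ℝ):ℂ))))
        * ((1 - Complex.exp (-(I*((ξ i j:ℝ):ℂ)) * (t:ℂ))) * (m t:ℂ)))
      = (-(H' t)) * (m t : ℂ) := by
    intro t
    have h1 : (∑ i, ∑ j, (a i * b j * (-(I * ((ξ i j:ℝ):ℂ))))
          * (1 - Complex.exp (-(I*((ξ i j:ℝ):ℂ)) * (t:ℂ)))) = -(H' t) := by
      calc (∑ i, ∑ j, (a i * b j * (-(I * ((ξ i j:ℝ):ℂ))))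
            * (1 - Complex.exp (-(I*((ξ i j:ℝ):ℂ)) * (t:ℂ))))
          = ∑ i, ∑ j, ((a i * b j * (-(I * ((ξ i j:ℝ):ℂ))))
              - (a i * b j) * (-(I * ((ξ i j:ℝ):ℂ)))
                * Complex.exp (-(I*((ξ i j:ℝ):ℂ)) * (t:ℂ))) :=
            Finset.sum_congr rfl fun i _ => Finset.sum_congr rfl fun j _ => by ring
        _ = (∑ i, ∑ j, a i * b j * (-(I * ((ξ i j:ℝ):ℂ))))
              - ∑ i, ∑ j, (a i * b j) * (-(I * ((ξ i j:ℝ):ℂ)))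
                * Complex.exp (-(I*((ξ i j:ℝ):ℂ)) * (t:ℂ)) := by
            rw [← Finset.sum_sub_distrib]
            exact Finset.sum_congr rfl fun i _ => by rw [← Finset.sum_sub_distrib]
        _ = -(H' t) := by rw [hIIm, zero_sub, hH'def]
    calc (∑ i, ∑ j, (a i * b j * (-(I * ((ξ i j:ℝ):ℂ))))
          * ((1 - Complex.exp (-(I*((ξ i j:ℝ):ℂ)) * (t:ℂ))) * (m t:ℂ)))
        = (∑ i, ∑ j, (a i * b j * (-(I * ((ξ i j:ℝ):ℂ))))
            * (1 - Complex.exp (-(I*((ξ i j:ℝ):ℂ)) * (t:ℂ)))) * (m t : ℂ) := by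
          rw [Finset.sum_mul]
          refine Finset.sum_congr rfl fun i _ => ?_
          rw [Finset.sum_mul]
          exact Finset.sum_congr rfl fun j _ => by ring
      _ = (-(H' t)) * (m t : ℂ) := by rw [h1]
  have hint3 : IntegrableOn (fun t : ℝ => (-(H' t)) * (m t : ℂ)) (Set.Ioi 0) := by
    have := integrable_finset_sum (μ := volume.restrict (Set.Ioi 0)) Finset.univ
      (fun i (_ : i ∈ Finset.univ) => integrable_finset_sum Finset.univ
        (fun j (_ : j ∈ Finset.univ) => hCint i j))
    exact this.congr (Filter.Eventually.of_forall fun t => hpt t)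
  have hCval : (∑ i, ∑ j, (a i * b j * (-(I * ((ξ i j:ℝ):ℂ)))) * w (ξ i j))
      = ∫ t in Set.Ioi (0:ℝ), (-(H' t)) * (m t : ℂ) := by
    rw [hsum3]
    exact setIntegral_congr_fun measurableSet_Ioi fun t _ => hpt t
  -- derivative facts
  have hder : ∀ t : ℝ, HasDerivAt (fun t => (H t).re) ((H' t).re) t := by
    intro t
    refine hasDerivAt_re_comp ?_
    rw [hHdef, hH'def]
    simp only
    refine HasDerivAt.fun_sum fun i _ => HasDerivAt.fun_sum fun j _ => ?_
    exact hasDerivAt_cexp_real (a i * b j) (-(I * ((ξ i j:ℝ):ℂ))) t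
  have hcont : Continuous fun t : ℝ => (H' t).re := by
    refine Complex.continuous_re.comp ?_
    rw [hH'def]
    refine continuous_finset_sum _ fun i _ => continuous_finset_sum _ fun j _ => ?_
    exact continuous_const.mul
      (Complex.continuous_exp.comp (continuous_const.mul Complex.continuous_ofReal))
  have hF0 : (H 0).re = 0 := by
    have : H 0 = (∑ i, a i) * (∑ j, b j) := by
      rw [hHdef]
      simp only [Complex.ofReal_zero, mul_zero, Complex.exp_zero, mul_one]
      exact (hfact a b)
    rw [this, ha, zero_mul, Complex.zero_re]
  have hFnn : ∀ t : ℝ, 0 ≤ (H t).re := by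
    intro t
    have hgH : H t = (∑ i, a i * Complex.exp (-(I*((x i:ℝ):ℂ)) * (t:ℂ)))
        * (starRingEnd ℂ) (∑ j, a j * Complex.exp (-(I*((x j:ℝ):ℂ)) * (t:ℂ))) := by
      rw [map_sum, Finset.sum_mul_sum, hHdef]
      refine Finset.sum_congr rfl fun i _ => Finset.sum_congr rfl fun j _ => ?_
      rw [map_mul, ← Complex.exp_conj]
      have hc : (starRingEnd ℂ) (-(I*((x j:ℝ):ℂ)) * (t:ℂ)) = (I*((x j:ℝ):ℂ)) * (t:ℂ) := by
        simp [map_mul, Complex.conj_ofReal]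
      rw [hc, hbdef]
      rw [mul_mul_mul_comm, ← Complex.exp_add]
      congr 1
      simp only [ξ]
      push_cast
      ring
    rw [hgH, Complex.mul_conj]
    simp only [Complex.ofReal_re]
    exact Complex.normSq_nonneg _
  -- derivative bound
  set K : ℝ := ∑ i, ∑ j, ‖a i * b j‖ * (|ξ i j| * max (|ξ i j|) 2) with hKdef
  have hK : ∀ t : ℝ, 0 < t → |(H' t).re| ≤ K * min t 1 := by
    intro t ht
    have hH't : H' t = ∑ i, ∑ j, (a i * b j) * (-(I * ((ξ i j:ℝ):ℂ)))
        * (Complex.exp (-(I * ((ξ i j:ℝ):ℂ)) * (t:ℂ)) - 1) := by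
      have : (∑ i, ∑ j, (a i * b j) * (-(I * ((ξ i j:ℝ):ℂ)))
          * (Complex.exp (-(I * ((ξ i j:ℝ):ℂ)) * (t:ℂ)) - 1))
          = H' t - ∑ i, ∑ j, a i * b j * (-(I * ((ξ i j:ℝ):ℂ))) := by
        rw [hH'def, ← Finset.sum_sub_distrib]
        refine Finset.sum_congr rfl fun i _ => ?_
        rw [← Finset.sum_sub_distrib]
        exact Finset.sum_congr rfl fun j _ => by ring
      rw [this, hIIm, sub_zero]
    calc |(H' t).re| ≤ ‖H' t‖ := Complex.abs_re_le_norm _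
      _ ≤ ∑ i, ∑ j, ‖(a i * b j) * (-(I * ((ξ i j:ℝ):ℂ)))
          * (Complex.exp (-(I * ((ξ i j:ℝ):ℂ)) * (t:ℂ)) - 1)‖ := by
        rw [hH't]
        refine (norm_sum_le _ _).trans ?_
        exact Finset.sum_le_sum fun i _ => norm_sum_le _ _
      _ ≤ ∑ i, ∑ j, ‖a i * b j‖ * (|ξ i j| * max (|ξ i j|) 2) * min t 1 := by
        refine Finset.sum_le_sum fun i _ => Finset.sum_le_sum fun j _ => ?_
        rw [norm_mul, norm_mul]
        have hn1 : ‖-(I * ((ξ i j:ℝ):ℂ))‖ = |ξ i j| := by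
          rw [norm_neg, norm_mul, Complex.norm_I, one_mul,
            Complex.norm_real, Real.norm_eq_abs]
        have harg : -(I * ((ξ i j:ℝ):ℂ)) * (t:ℂ) = ((-(ξ i j * t) : ℝ) : ℂ) * I := by
          push_cast; ring
        have hexp1 : ‖Complex.exp (-(I * ((ξ i j:ℝ):ℂ)) * (t:ℂ)) - 1‖ ≤ |ξ i j| * t := by
          rw [harg]
          refine (norm_expI_sub_one_le _).trans ?_
          rw [abs_neg, abs_mul, abs_of_pos ht]
        have hexp2 : ‖Complex.exp (-(I * ((ξ i j:ℝ):ℂ)) * (t:ℂ)) - 1‖ ≤ 2 := by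
          refine (norm_sub_le _ _).trans ?_
          rw [harg, Complex.norm_exp_ofReal_mul_I, norm_one]
          norm_num
        have hexp : ‖Complex.exp (-(I * ((ξ i j:ℝ):ℂ)) * (t:ℂ)) - 1‖
            ≤ max (|ξ i j|) 2 * min t 1 := by
          rcases le_or_gt t 1 with h | h
          · rw [min_eq_left h]
            refine hexp1.trans ?_
            exact mul_le_mul_of_nonneg_right (le_max_left _ _) ht.le
          · rw [min_eq_right h.le, mul_one]
            exact hexp2.trans (le_max_right _ _)
        rw [hn1]
        calc ‖a i * b j‖ * |ξ i j| * ‖Complex.exp (-(I * ((ξ i j:ℝ):ℂ)) * (t:ℂ)) - 1‖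
            ≤ ‖a i * b j‖ * |ξ i j| * (max (|ξ i j|) 2 * min t 1) := by
              refine mul_le_mul_of_nonneg_left hexp ?_
              positivity
          _ = ‖a i * b j‖ * (|ξ i j| * max (|ξ i j|) 2) * min t 1 := by ring
      _ = K * min t 1 := by
        rw [hKdef, Finset.sum_mul]
        exact Finset.sum_congr rfl fun i _ => by rw [Finset.sum_mul]
  -- apply the key lemma
  have hkey := key_nonneg m hm_nonneg hm_mono hm_int (fun t => (H t).re) (fun t => (H' t).re)
    hder hcont hF0 hFnn K hK
  -- compute the real part of term C
  have hCre : (∫ t in Set.Ioi (0:ℝ), (-(H' t)) * (m t : ℂ)).re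
      = -∫ t in Set.Ioi (0:ℝ), (H' t).re * m t := by
    have h := (Complex.reCLM.integral_comp_comm hint3).symm
    simp only [Complex.reCLM_apply] at h
    rw [h, ← MeasureTheory.integral_neg]
    refine setIntegral_congr_fun measurableSet_Ioi fun t _ => ?_
    simp [Complex.mul_re]
  -- finish
  have hfinal : (∑ i, ∑ j, a i * (-(I * ((ξ i j : ℝ) : ℂ)) * f (I * ((ξ i j : ℝ):ℂ))) * b j).re
      ≤ 0 := by
    rw [hsplit, hA, zero_add, Complex.add_re, hBval, Complex.ofReal_re, hCval, hCre]
    have h1 : -2 * β * Complex.normSq (∑ i, a i * (x i:ℂ)) ≤ 0 := by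
      have := Complex.normSq_nonneg (∑ i, a i * (x i:ℂ))
      nlinarith
    linarith
  exact hfinal

lemma part3 (α β : ℝ) (m : ℝ → ℝ) (f : ℂ → ℂ)
    (hf : ∀ z : ℂ, 0 ≤ z.re → f z = (α : ℂ) + (β : ℂ) * z +
        ∫ t in Set.Ioi (0 : ℝ), (1 - Complex.exp (-z * (t : ℂ))) * (m t : ℂ))
    (ξ : ℝ) :
    -(Complex.I * ((-ξ : ℝ) : ℂ)) * f (Complex.I * ((-ξ : ℝ) : ℂ)) =
      (starRingEnd ℂ) (-(Complex.I * (ξ:ℂ)) * f (Complex.I * (ξ:ℂ))) := by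
  have hconjint : (starRingEnd ℂ)
      (∫ t in Set.Ioi (0:ℝ), (1 - Complex.exp (-(I*(ξ:ℂ)) * (t:ℂ))) * (m t:ℂ))
      = ∫ t in Set.Ioi (0:ℝ), (1 - Complex.exp (-(I*((-ξ:ℝ):ℂ)) * (t:ℂ))) * (m t:ℂ) := by
    rw [← integral_conj]
    refine setIntegral_congr_fun measurableSet_Ioi fun t _ => ?_
    rw [map_mul, Complex.conj_ofReal, map_sub, map_one, ← Complex.exp_conj]
    congr 2
    simp only [map_mul, map_neg, Complex.conj_I, Complex.conj_ofReal]
    push_cast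
    ring
  have hconjf : (starRingEnd ℂ) (f (I * (ξ:ℂ))) = f (I * ((-ξ:ℝ):ℂ)) := by
    rw [hf (I * (ξ:ℂ)) (by simp), hf (I * ((-ξ:ℝ):ℂ)) (by simp)]
    rw [map_add, map_add, map_mul, Complex.conj_ofReal, Complex.conj_ofReal, hconjint]
    congr 2
    simp only [map_mul, Complex.conj_I, Complex.conj_ofReal]
    push_cast
    ring
  rw [map_mul, hconjf]
  congr 1
  simp only [map_neg, map_mul, Complex.conj_I, Complex.conj_ofReal]
  push_cast
  ring

/-- Let α, β ≥ 0 and let m : (0,∞) → [0,∞) be monotone decreasing with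
∫₀^∞ min(t,1)·m(t) dt < ∞. With f(z) = α + β·z + ∫₀^∞ (1 − e^{−zt}) m(t) dt for
Re z ≥ 0, the function γ(ξ) := −iξ·f(iξ) is conditionally negative definite, and
ξ ↦ −Re(iξ·f(iξ)) is a variogram on ℝ. -/
theorem stmt19 (α β : ℝ) (hα : 0 ≤ α) (hβ : 0 ≤ β) (m : ℝ → ℝ)
    (hm_nonneg : ∀ t : ℝ, 0 < t → 0 ≤ m t)
    (hm_mono : AntitoneOn m (Set.Ioi 0))
    (hm_int : IntegrableOn (fun t : ℝ => min t 1 * m t) (Set.Ioi 0))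
    (f : ℂ → ℂ)
    (hf : ∀ z : ℂ, 0 ≤ z.re →
      f z = (α : ℂ) + (β : ℂ) * z +
        ∫ t in Set.Ioi (0 : ℝ), (1 - Complex.exp (-z * (t : ℂ))) * (m t : ℂ)) :
    (∀ z : ℂ, 0 ≤ z.re →
      IntegrableOn (fun t : ℝ => (1 - Complex.exp (-z * (t : ℂ))) * (m t : ℂ))
        (Set.Ioi 0)) ∧
    ((fun ξ : ℝ => -(Complex.I * ξ) * f (Complex.I * ξ)) 0 = 0) ∧
    (∀ ξ : ℝ, -(Complex.I * (-ξ : ℝ)) * f (Complex.I * (-ξ : ℝ)) =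
      (starRingEnd ℂ) (-(Complex.I * ξ) * f (Complex.I * ξ))) ∧
    (∀ (n : ℕ) (x : Fin n → ℝ) (a : Fin n → ℂ), (∑ i, a i) = 0 →
      (∑ i, ∑ j, a i * (-(Complex.I * ((x i - x j : ℝ) : ℂ)) *
        f (Complex.I * ((x i - x j : ℝ) : ℂ))) * (starRingEnd ℂ) (a j)).re ≤ 0) ∧
    IsVariogram1 (fun ξ : ℝ => -(Complex.I * ξ * f (Complex.I * ξ)).re) := by
  have h3 := part3 α β m f hf
  have h4 := part4 α β hβ m hm_nonneg hm_mono hm_int f hf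
  set γR : ℝ → ℝ := fun ξ : ℝ => -(Complex.I * ξ * f (Complex.I * ξ)).re with hγRdef
  have heven : ∀ ξ : ℝ, γR (-ξ) = γR ξ := by
    intro ξ
    have h := congrArg Complex.re (h3 ξ)
    simp only [neg_mul, Complex.neg_re, Complex.conj_re] at h
    simp only [γR]
    exact h
  have hG : ∀ ξ : ℝ, ((γR ξ : ℝ) : ℂ)
      = (-(Complex.I * (ξ:ℂ)) * f (Complex.I * (ξ:ℂ))
          + -(Complex.I * ((-ξ:ℝ):ℂ)) * f (Complex.I * ((-ξ:ℝ):ℂ))) / 2 := by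
    intro ξ
    rw [h3 ξ, show -(Complex.I * (ξ:ℂ)) * f (Complex.I * (ξ:ℂ))
        = -(Complex.I * (ξ:ℂ) * f (Complex.I * (ξ:ℂ))) from by ring,
      Complex.add_conj]
    simp only [γR, Complex.neg_re, Complex.ofReal_neg, Complex.ofReal_mul, Complex.ofReal_ofNat]
    ring
  refine ⟨fun z hz => integrable_one_sub_exp m hm_nonneg hm_int z hz, by simp, h3, h4,
    ?_, ?_, ?_⟩
  · simp [γR]
  · exact heven
  · intro n x a ha
    have haconj : (∑ i, (starRingEnd ℂ) (a i)) = 0 := by rw [← map_sum, ha, map_zero]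
    constructor
    · -- imaginary part vanishes
      have hsym : ∀ i j, γR (x j - x i) = γR (x i - x j) := by
        intro i j
        rw [show x j - x i = -(x i - x j) by ring, heven]
      have hconjS : (starRingEnd ℂ)
          (∑ i, ∑ j, a i * ((γR (x i - x j) : ℝ) : ℂ) * (starRingEnd ℂ) (a j))
          = ∑ i, ∑ j, a i * ((γR (x i - x j) : ℝ) : ℂ) * (starRingEnd ℂ) (a j) := by
        rw [map_sum]
        simp only [map_sum, map_mul, Complex.conj_ofReal, Complex.conj_conj]
        rw [Finset.sum_comm]
        refine Finset.sum_congr rfl fun i _ => Finset.sum_congr rfl fun j _ => ?_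
        rw [hsym]
        ring
      have := Complex.conj_eq_iff_im.mp hconjS
      exact this
    · -- real part nonpositive
      have hsplit : ∀ i j, a i * ((γR (x i - x j) : ℝ) : ℂ) * (starRingEnd ℂ) (a j)
          = (a i * (-(Complex.I * (((x i - x j : ℝ)):ℂ)) * f (Complex.I * (((x i - x j : ℝ)):ℂ)))
              * (starRingEnd ℂ) (a j)) / 2
            + (a i * (-(Complex.I * ((-(x i - x j) : ℝ):ℂ))
                * f (Complex.I * ((-(x i - x j) : ℝ):ℂ))) * (starRingEnd ℂ) (a j)) / 2 := by
        intro i j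
        rw [hG (x i - x j)]
        ring
      have hsum : (∑ i, ∑ j, a i * ((γR (x i - x j) : ℝ) : ℂ) * (starRingEnd ℂ) (a j))
          = (∑ i, ∑ j, (a i * (-(Complex.I * (((x i - x j : ℝ)):ℂ))
              * f (Complex.I * (((x i - x j : ℝ)):ℂ))) * (starRingEnd ℂ) (a j)) / 2)
            + ∑ i, ∑ j, (a i * (-(Complex.I * ((-(x i - x j) : ℝ):ℂ))
                * f (Complex.I * ((-(x i - x j) : ℝ):ℂ))) * (starRingEnd ℂ) (a j)) / 2 := by
        rw [← Finset.sum_add_distrib]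
        refine Finset.sum_congr rfl fun i _ => ?_
        rw [← Finset.sum_add_distrib]
        exact Finset.sum_congr rfl fun j _ => hsplit i j
      -- first piece
      have hre1 : (∑ i, ∑ j, a i * (-(Complex.I * (((x i - x j : ℝ)):ℂ))
          * f (Complex.I * (((x i - x j : ℝ)):ℂ))) * (starRingEnd ℂ) (a j)).re ≤ 0 :=
        h4 n x a ha
      -- second piece: conjugate trick
      have hre2 : (∑ i, ∑ j, a i * (-(Complex.I * ((-(x i - x j) : ℝ):ℂ))
          * f (Complex.I * ((-(x i - x j) : ℝ):ℂ))) * (starRingEnd ℂ) (a j)).re ≤ 0 := by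
        have hP := h4 n x (fun i => (starRingEnd ℂ) (a i)) haconj
        have hc : (starRingEnd ℂ) (∑ i, ∑ j, a i * (-(Complex.I * ((-(x i - x j) : ℝ):ℂ))
            * f (Complex.I * ((-(x i - x j) : ℝ):ℂ))) * (starRingEnd ℂ) (a j))
            = ∑ i, ∑ j, (starRingEnd ℂ) (a i) * (-(Complex.I * (((x i - x j : ℝ)):ℂ))
              * f (Complex.I * (((x i - x j : ℝ)):ℂ))) * (starRingEnd ℂ) ((starRingEnd ℂ) (a j)) := by
          rw [map_sum]
          refine Finset.sum_congr rfl fun i _ => ?_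
          rw [map_sum]
          refine Finset.sum_congr rfl fun j _ => ?_
          rw [map_mul, map_mul, h3 (x i - x j), Complex.conj_conj]
        have h5 : (∑ i, ∑ j, a i * (-(Complex.I * ((-(x i - x j) : ℝ):ℂ))
            * f (Complex.I * ((-(x i - x j) : ℝ):ℂ))) * (starRingEnd ℂ) (a j)).re
            = ((starRingEnd ℂ) (∑ i, ∑ j, a i * (-(Complex.I * ((-(x i - x j) : ℝ):ℂ))
              * f (Complex.I * ((-(x i - x j) : ℝ):ℂ))) * (starRingEnd ℂ) (a j))).re := by
          rw [Complex.conj_re]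
        rw [h5, hc]
        exact hP
      rw [hsum, Complex.add_re]
      have hh1 : ∀ (g : Fin n → Fin n → ℂ), (∑ i, ∑ j, g i j / 2) = (∑ i, ∑ j, g i j) / 2 := by
        intro g
        rw [Finset.sum_div]
        exact Finset.sum_congr rfl fun i _ => by rw [Finset.sum_div]
      rw [hh1, hh1]
      rw [show (2:ℂ) = ((2:ℝ):ℂ) from by norm_num, Complex.div_ofReal_re, Complex.div_ofReal_re]
      linarith
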